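/- Let C be a category satisfying property (F), let k be a commutative ring, and let M and N be C-modules over k that are generated in finite degrees. Then the pointwise tensor product M ⊗ N, defined by (M ⊗ N)_x = M_x ⊗_k N_x, is generated in finite degrees. -/

import Mathlib

open CategoryTheory

universe u v w

variable {k : Type u} [CommRing k]

namespace CatModule

variable {C : Type v} [Category.{w} C]

/-- A functor `Φ : C ⥤ D` satisfies property (F) if for every `y : D` there are finitely
many objects `x₁, …, xₙ : C` and morphisms `fᵢ : y ⟶ Φ xᵢ` such that every morphism
`f : y ⟶ Φ x` factors as `f = fᵢ ≫ Φ g` for some `i` and some `g : xᵢ ⟶ x`. -/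
def PropertyF {D : Type*} [Category D] (Φ : C ⥤ D) : Prop :=
  ∀ y : D, ∃ (n : ℕ) (x : Fin n → C) (t : ∀ i, y ⟶ Φ.obj (x i)),
    ∀ (z : C) (f : y ⟶ Φ.obj z), ∃ (i : Fin n) (g : x i ⟶ z), f = t i ≫ Φ.map g

/-- A category `C` satisfies property (F) if the diagonal functor `C ⥤ C × C` does. -/
def CatPropertyF (C : Type v) [Category.{w} C] : Prop :=
  PropertyF (Functor.diag C)

/-- A `C`-module `M` (a functor `C ⥤ Mod_k`) is generated in finite degrees if there are
finitely many objects `x₁, …, xₙ` of `C` such that for every object `y` the images of the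
`M (xᵢ)` under all morphisms `xᵢ ⟶ y` span `M y`; equivalently, the canonical map
`⊕ᵢ M_{xᵢ} ⊗ P_{xᵢ} ⟶ M` is surjective. -/
def GeneratedInFiniteDegrees (M : C ⥤ ModuleCat.{u} k) : Prop :=
  ∃ (n : ℕ) (x : Fin n → C),
    ∀ y : C, Submodule.span k
      {v : M.obj y | ∃ (i : Fin n) (f : x i ⟶ y) (m : M.obj (x i)), M.map f m = v} = ⊤

/-- The pointwise tensor product of two `C`-modules over `k`:
`(M ⊗ N) x = M x ⊗[k] N x`. -/
noncomputable def tensorObj (M N : C ⥤ ModuleCat.{u} k) : C ⥤ ModuleCat.{u} k where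
  obj x := ModuleCat.of k (TensorProduct k (M.obj x) (N.obj x))
  map f := ModuleCat.ofHom (TensorProduct.map (M.map f).hom (N.map f).hom)
  map_id x := by
    rw [M.map_id, N.map_id]
    ext : 1
    simp [TensorProduct.map_id]
  map_comp f g := by
    rw [M.map_comp, N.map_comp]
    ext : 1
    simp [TensorProduct.map_comp]

end CatModule

open CatModule

/-- Let `C` be a category satisfying property (F), let `k` be a commutative ring, and let
`M` and `N` be `C`-modules over `k` that are generated in finite degrees.  Then the
pointwise tensor product `M ⊗ N` is generated in finite degrees. -/
theorem generatedInFiniteDegrees_tensor {C : Type v} [Category.{w} C]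
    (hC : CatPropertyF C) (M N : C ⥤ ModuleCat.{u} k)
    (hM : GeneratedInFiniteDegrees M) (hN : GeneratedInFiniteDegrees N) :
    GeneratedInFiniteDegrees (tensorObj M N) := by
  classical
  obtain ⟨m, xM, hxM⟩ := hM
  obtain ⟨n, xN, hxN⟩ := hN
  choose num zz tt htt using fun p : Fin m × Fin n => hC (xM p.1, xN p.2)
  let ι := Σ p : Fin m × Fin n, Fin (num p)
  let e : ι ≃ Fin (Fintype.card ι) := Fintype.equivFin ι
  refine ⟨Fintype.card ι, fun j => zz (e.symm j).1 (e.symm j).2, fun y => ?_⟩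
  set S := {v : (tensorObj M N).obj y | ∃ (i : Fin (Fintype.card ι))
      (f : zz (e.symm i).1 (e.symm i).2 ⟶ y)
      (mm : (tensorObj M N).obj (zz (e.symm i).1 (e.symm i).2)),
      (tensorObj M N).map f mm = v} with hS
  have hstep : ∀ (a : M.obj y),
      (∃ (i : Fin m) (f : xM i ⟶ y) (mm : M.obj (xM i)), M.map f mm = a) →
      ∀ (b : N.obj y),
      (∃ (j : Fin n) (g : xN j ⟶ y) (nn : N.obj (xN j)), N.map g nn = b) →
      a ⊗ₜ[k] b ∈ Submodule.span k S := by
    rintro _ ⟨i, f, mm, rfl⟩ _ ⟨j, g, nn, rfl⟩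
    obtain ⟨l, h, hh⟩ := htt (i, j) y ⟨f, g⟩
    have hf : f = (tt (i, j) l).1 ≫ h := congrArg Prod.fst hh
    have hg : g = (tt (i, j) l).2 ≫ h := congrArg Prod.snd hh
    apply Submodule.subset_span
    rw [hS]
    refine ⟨e ⟨(i, j), l⟩, ?_⟩
    rw [Equiv.symm_apply_apply]
    refine ⟨h, (M.map (tt (i, j) l).1 mm) ⊗ₜ[k] (N.map (tt (i, j) l).2 nn), ?_⟩
    rw [hf, hg]
    show TensorProduct.map (M.map h).hom (N.map h).hom _ = _
    rw [TensorProduct.map_tmul, M.map_comp, N.map_comp]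
    rfl
  have key : ∀ (a : M.obj y) (b : N.obj y), a ⊗ₜ[k] b ∈ Submodule.span k S := by
    intro a b
    have ha : a ∈ Submodule.span k
        {v : M.obj y | ∃ (i : Fin m) (f : xM i ⟶ y) (mm : M.obj (xM i)),
          M.map f mm = v} := by rw [hxM y]; trivial
    have hb : b ∈ Submodule.span k
        {v : N.obj y | ∃ (j : Fin n) (g : xN j ⟶ y) (nn : N.obj (xN j)),
          N.map g nn = v} := by rw [hxN y]; trivial
    induction ha using Submodule.span_induction with
    | mem a' ha' =>
      induction hb using Submodule.span_induction with
      | mem b' hb' => exact hstep a' ha' b' hb'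
      | zero => rw [TensorProduct.tmul_zero]; exact Submodule.zero_mem _
      | add b1 b2 _ _ h1 h2 =>
        rw [TensorProduct.tmul_add]; exact Submodule.add_mem _ h1 h2
      | smul c b' _ h1 =>
        rw [TensorProduct.tmul_smul]; exact Submodule.smul_mem _ c h1
    | zero => rw [TensorProduct.zero_tmul]; exact Submodule.zero_mem _
    | add a1 a2 _ _ h1 h2 =>
      rw [TensorProduct.add_tmul]; exact Submodule.add_mem _ h1 h2
    | smul c a' _ h1 =>
      rw [← TensorProduct.smul_tmul']; exact Submodule.smul_mem _ c h1
  rw [eq_top_iff]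
  refine le_trans (TensorProduct.span_tmul_eq_top k (M.obj y) (N.obj y)).ge ?_
  refine Submodule.span_le.mpr ?_
  rintro v ⟨a, b, rfl⟩
  exact key a b
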